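/- Let 0 < λ, γ ≤ 1. The observables A_λ and B_γ are jointly measurable if and only if A_{λ'} and B_{γ'} are jointly measurable for all 0 ≤ λ' ≤ λ and 0 ≤ γ' ≤ γ. -/

import Mathlib

open Matrix Kronecker Finset
open scoped ComplexOrder

/-- ω = e^{2πi/d} -/
noncomputable def ww (d : ℕ) : ℂ := Complex.exp (2 * Real.pi * Complex.I / d)

/-- shift unitary U_x φ_k = φ_{k+x} -/
noncomputable def Um (d : ℕ) (x : ZMod d) : Matrix (ZMod d) (ZMod d) ℂ :=
  fun i j => if i = j + x then 1 else 0

/-- modulation unitary V_y φ_k = ω^{yk} φ_k -/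
noncomputable def Vm (d : ℕ) (y : ZMod d) : Matrix (ZMod d) (ZMod d) ℂ :=
  Matrix.diagonal fun i => ww d ^ (y * i).val

/-- finite Fourier transform F φ_k = (1/√d) Σ_h ω^{-hk} φ_h -/
noncomputable def Fm (d : ℕ) : Matrix (ZMod d) (ZMod d) ℂ :=
  fun i j => (1 / Real.sqrt d : ℂ) * (ww d)⁻¹ ^ (i * j).val

/-- the standard orthonormal basis vector φ_k -/
noncomputable def phiV (d : ℕ) (k : ZMod d) : ZMod d → ℂ := Pi.single k 1

/-- ψ_k = F* φ_k -/
noncomputable def psiV (d : ℕ) [NeZero d] (k : ZMod d) : ZMod d → ℂ :=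
  (Fm d)ᴴ.mulVec (phiV d k)

/-- A(j) = |φ_j⟩⟨φ_j| -/
noncomputable def Aob (d : ℕ) (j : ZMod d) : Matrix (ZMod d) (ZMod d) ℂ :=
  vecMulVec (phiV d j) (star (phiV d j))

/-- B(k) = |ψ_k⟩⟨ψ_k| -/
noncomputable def Bob (d : ℕ) [NeZero d] (k : ZMod d) : Matrix (ZMod d) (ZMod d) ℂ :=
  vecMulVec (psiV d k) (star (psiV d k))

/-- the uniformly noisy version A_λ of A -/
noncomputable def Asm (d : ℕ) (l : ℝ) (j : ZMod d) : Matrix (ZMod d) (ZMod d) ℂ :=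
  (l : ℂ) • Aob d j + (((1 - l) / d : ℝ) : ℂ) • 1

/-- the uniformly noisy version B_γ of B -/
noncomputable def Bsm (d : ℕ) [NeZero d] (g : ℝ) (k : ZMod d) : Matrix (ZMod d) (ZMod d) ℂ :=
  (g : ℂ) • Bob d k + (((1 - g) / d : ℝ) : ℂ) • 1

/-- joint measurability of A_λ and B_γ -/
def JM (d : ℕ) [NeZero d] (l g : ℝ) : Prop :=
  ∃ C : ZMod d → ZMod d → Matrix (ZMod d) (ZMod d) ℂ,
    (∀ j k, (C j k).PosSemidef) ∧
    (∀ j, ∑ k : ZMod d, C j k = Asm d l j) ∧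
    (∀ k, ∑ j : ZMod d, C j k = Bsm d g k)


section Aux

lemma psd_smul {n : Type*} [Fintype n] (c : ℝ) (hc : 0 ≤ c) {M : Matrix n n ℂ}
    (hM : M.PosSemidef) : ((c:ℂ) • M).PosSemidef := by
  refine Matrix.PosSemidef.of_dotProduct_mulVec_nonneg ?_ ?_
  · unfold Matrix.IsHermitian
    rw [conjTranspose_smul, hM.1.eq]
    simp
  · intro x
    rw [smul_mulVec, dotProduct_smul, smul_eq_mul]
    exact mul_nonneg (by exact_mod_cast hc) (hM.dotProduct_mulVec_nonneg x)

lemma psd_outer {n : Type*} [Fintype n] (v : n → ℂ) :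
    (vecMulVec v (star v)).PosSemidef := by
  refine Matrix.PosSemidef.of_dotProduct_mulVec_nonneg ?_ ?_
  · ext i j
    simp [Matrix.conjTranspose_apply, vecMulVec_apply, mul_comm]
  · intro x
    have : dotProduct (star x) ((vecMulVec v (star v)) *ᵥ x)
        = star (dotProduct (star v) x) * (dotProduct (star v) x) := by
      simp [dotProduct, mulVec, vecMulVec_apply, Finset.mul_sum, Finset.sum_mul]
      rw [Finset.sum_comm]
      congr 1; ext i; congr 1; ext j; ring
    rw [this]
    exact star_mul_self_nonneg _

variable (d : ℕ) [NeZero d]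

lemma ww_pow_d : ww d ^ d = 1 := (Complex.isPrimitiveRoot_exp d (NeZero.ne d)).pow_eq_one

lemma ww_ne_zero : ww d ≠ 0 := Complex.exp_ne_zero _

lemma ww_pow_mod (n : ℕ) : ww d ^ (n % d) = ww d ^ n := by
  conv_rhs => rw [← Nat.div_add_mod n d, pow_add, pow_mul, ww_pow_d, one_pow, one_mul]

lemma star_ww : star (ww d) = (ww d)⁻¹ := by
  rw [ww, Complex.star_def, ← Complex.exp_conj, ← Complex.exp_neg]
  congr 1
  rw [map_div₀, ← Complex.ofReal_ofNat, ← Complex.ofReal_mul, _root_.map_mul, Complex.conj_ofReal,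
    Complex.conj_I, Complex.conj_natCast]
  ring

lemma ww_add (x y : ZMod d) : ww d ^ (x + y).val = ww d ^ x.val * ww d ^ y.val := by
  rw [← pow_add, ZMod.val_add, ww_pow_mod]

lemma ww_mul (x y : ZMod d) : ww d ^ (x * y).val = (ww d ^ x.val) ^ y.val := by
  rw [← pow_mul, ZMod.val_mul, ww_pow_mod]

lemma sum_ww (m : ZMod d) (hm : m ≠ 0) : ∑ h : ZMod d, ww d ^ (h * m).val = 0 := by
  have hz : ww d ^ m.val ≠ 1 := by
    refine (Complex.isPrimitiveRoot_exp d (NeZero.ne d)).pow_ne_one_of_pos_of_lt ?_ (ZMod.val_lt m)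
    exact (fun h => hm (by rwa [← ZMod.val_eq_zero]))
  have : ∑ h : ZMod d, ww d ^ (h * m).val = ∑ x ∈ Finset.range d, (ww d ^ m.val) ^ x := by
    refine Finset.sum_nbij' (fun h => h.val) (fun x => (x : ZMod d)) ?_ ?_ ?_ ?_ ?_
    · intro h _; exact Finset.mem_range.mpr (ZMod.val_lt h)
    · intro x _; exact Finset.mem_univ _
    · intro h _; exact ZMod.natCast_rightInverse h
    · intro x hx; exact ZMod.val_cast_of_lt (Finset.mem_range.mp hx)
    · intro h _; rw [ww_mul, ← pow_mul, Nat.mul_comm, pow_mul]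
  rw [this, geom_sum_eq hz]
  have : (ww d ^ m.val) ^ d = 1 := by rw [← pow_mul, mul_comm, pow_mul, ww_pow_d, one_pow]
  rw [this]; simp

lemma Fm_ortho (i j : ZMod d) :
    ∑ h : ZMod d, star (Fm d h i) * Fm d h j = if i = j then 1 else 0 := by
  have hkey : ∀ h : ZMod d, ww d ^ (h*i).val * ((ww d) ^ (h*j).val)⁻¹
      = ww d ^ (h*(i-j)).val := by
    intro h
    rw [mul_inv_eq_iff_eq_mul₀ (pow_ne_zero _ (ww_ne_zero d)), ← ww_add]
    congr 1
    ring_nf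
  have e1 : ∀ h : ZMod d, star (Fm d h i) * Fm d h j
      = (1/(d:ℂ)) * ww d ^ (h*(i-j)).val := by
    intro h
    have : star ((1 / (Real.sqrt d : ℂ)) * (ww d)⁻¹ ^ (h*i).val)
        = (1 / (Real.sqrt d : ℂ)) * ww d ^ (h*i).val := by
      rw [star_mul', star_pow, star_inv₀, star_ww, inv_inv, star_div₀, star_one,
        Complex.star_def, Complex.conj_ofReal, mul_comm]
    rw [Fm, this, Fm]
    have hsq : (1/(Real.sqrt d:ℂ)) * (1/(Real.sqrt d:ℂ)) = 1/(d:ℂ) := by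
      rw [div_mul_div_comm, one_mul, ← Complex.ofReal_mul,
        Real.mul_self_sqrt (Nat.cast_nonneg d)]
      norm_num
    calc (1 / (Real.sqrt d : ℂ)) * ww d ^ (h*i).val
          * ((1 / (Real.sqrt d : ℂ)) * (ww d)⁻¹ ^ (h*j).val)
        = ((1/(Real.sqrt d:ℂ)) * (1/(Real.sqrt d:ℂ)))
          * (ww d ^ (h*i).val * ((ww d) ^ (h*j).val)⁻¹) := by rw [inv_pow]; ring
      _ = (1/(d:ℂ)) * ww d ^ (h*(i-j)).val := by rw [hsq, hkey]
  rw [Finset.sum_congr rfl (fun h _ => e1 h), ← Finset.mul_sum]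
  by_cases hij : i = j
  · subst hij
    simp only [sub_self, mul_zero, ZMod.val_zero, pow_zero, if_pos rfl]
    rw [Finset.sum_const, Finset.card_univ, ZMod.card, nsmul_eq_mul, mul_one]
    rw [one_div, inv_mul_cancel₀ (by exact_mod_cast (NeZero.ne d)), if_pos trivial]
  · rw [sum_ww d (i-j) (sub_ne_zero.mpr hij), mul_zero, if_neg hij]

lemma sum_Aob : ∑ j : ZMod d, Aob d j = 1 := by
  ext i i'
  simp only [Matrix.sum_apply, Aob, vecMulVec_apply, phiV, Pi.star_apply, Pi.single_apply,
    Matrix.one_apply]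
  simp only [apply_ite star, star_one, star_zero, ite_mul, one_mul, zero_mul, mul_ite, mul_one,
    mul_zero]
  by_cases h : i = i'
  · subst h; simp
  · rw [if_neg h, Finset.sum_eq_zero]
    intro j _
    by_cases h1 : i = j
    · subst h1; rw [if_pos rfl, if_neg (fun hh => h hh.symm)]
    · simp [h1]

lemma psiV_apply (k i : ZMod d) : psiV d k i = star (Fm d k i) := by
  simp [psiV, mulVec, dotProduct, phiV, Pi.single_apply, Matrix.conjTranspose_apply]

lemma sum_Bob : ∑ k : ZMod d, Bob d k = 1 := by
  ext i i'
  simp only [Matrix.sum_apply, Bob, vecMulVec_apply, Pi.star_apply, psiV_apply, star_star,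
    Matrix.one_apply]
  exact Fm_ortho d i i'

lemma sum_Asm (l : ℝ) : ∑ j : ZMod d, Asm d l j = 1 := by
  have hd : ((d:ℝ)) ≠ 0 := Nat.cast_ne_zero.mpr (NeZero.ne d)
  simp only [Asm, Finset.sum_add_distrib, ← Finset.smul_sum, sum_Aob, Finset.sum_const,
    Finset.card_univ, ZMod.card, smul_smul]
  have hdc : ((d:ℂ)) ≠ 0 := Nat.cast_ne_zero.mpr (NeZero.ne d)
  rw [← Nat.cast_smul_eq_nsmul ℂ, smul_smul, ← add_smul]
  nth_rewrite 2 [← one_smul ℂ (1 : Matrix (ZMod d) (ZMod d) ℂ)]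
  congr 1
  push_cast
  field_simp
  ring

lemma sum_Bsm (g : ℝ) : ∑ k : ZMod d, Bsm d g k = 1 := by
  have hd : ((d:ℝ)) ≠ 0 := Nat.cast_ne_zero.mpr (NeZero.ne d)
  simp only [Bsm, Finset.sum_add_distrib, ← Finset.smul_sum, sum_Bob, Finset.sum_const,
    Finset.card_univ, ZMod.card, smul_smul]
  have hdc : ((d:ℂ)) ≠ 0 := Nat.cast_ne_zero.mpr (NeZero.ne d)
  rw [← Nat.cast_smul_eq_nsmul ℂ, smul_smul, ← add_smul]
  nth_rewrite 2 [← one_smul ℂ (1 : Matrix (ZMod d) (ZMod d) ℂ)]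
  congr 1
  push_cast
  field_simp
  ring

lemma psd_Asm {l : ℝ} (h0 : 0 ≤ l) (h1 : l ≤ 1) (j : ZMod d) : (Asm d l j).PosSemidef := by
  refine Matrix.PosSemidef.add (psd_smul l h0 (psd_outer _)) (psd_smul _ (div_nonneg (by linarith) (Nat.cast_nonneg d)) .one)

lemma psd_Bsm {g : ℝ} (h0 : 0 ≤ g) (h1 : g ≤ 1) (k : ZMod d) : (Bsm d g k).PosSemidef := by
  refine Matrix.PosSemidef.add (psd_smul g h0 (psd_outer _)) (psd_smul _ (div_nonneg (by linarith) (Nat.cast_nonneg d)) .one)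

lemma Asm_convex (t a b : ℝ) (j : ZMod d) :
    (t:ℂ) • Asm d a j + (((1-t):ℝ):ℂ) • Asm d b j = Asm d (t*a + (1-t)*b) j := by
  simp only [Asm]
  match_scalars <;> push_cast <;> ring

lemma Bsm_convex (t a b : ℝ) (k : ZMod d) :
    (t:ℂ) • Bsm d a k + (((1-t):ℝ):ℂ) • Bsm d b k = Bsm d (t*a + (1-t)*b) k := by
  simp only [Bsm]
  match_scalars <;> push_cast <;> ring

lemma JM_convex {l1 g1 l2 g2 t : ℝ} (ht0 : 0 ≤ t) (ht1 : t ≤ 1)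
    (h1 : JM d l1 g1) (h2 : JM d l2 g2) :
    JM d (t*l1 + (1-t)*l2) (t*g1 + (1-t)*g2) := by
  obtain ⟨C1, hC1p, hC1r, hC1c⟩ := h1
  obtain ⟨C2, hC2p, hC2r, hC2c⟩ := h2
  refine ⟨fun j k => (t:ℂ) • C1 j k + (((1-t):ℝ):ℂ) • C2 j k, ?_, ?_, ?_⟩
  · intro j k
    exact (psd_smul t ht0 (hC1p j k)).add (psd_smul _ (by linarith) (hC2p j k))
  · intro j
    rw [Finset.sum_add_distrib, ← Finset.smul_sum, ← Finset.smul_sum, hC1r j, hC2r j,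
      Asm_convex]
  · intro k
    rw [Finset.sum_add_distrib, ← Finset.smul_sum, ← Finset.smul_sum, hC1c k, hC2c k,
      Bsm_convex]

lemma JM_marg_left {l : ℝ} (h0 : 0 ≤ l) (h1 : l ≤ 1) : JM d l 0 := by
  have hd : ((d:ℝ)) ≠ 0 := Nat.cast_ne_zero.mpr (NeZero.ne d)
  refine ⟨fun j k => (((1/d : ℝ)):ℂ) • Asm d l j, ?_, ?_, ?_⟩
  · intro j k
    exact psd_smul _ (one_div_nonneg.mpr (Nat.cast_nonneg d)) (psd_Asm d h0 h1 j)
  · intro j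
    have hdc : ((d:ℂ)) ≠ 0 := Nat.cast_ne_zero.mpr (NeZero.ne d)
    rw [Finset.sum_const, Finset.card_univ, ZMod.card, ← Nat.cast_smul_eq_nsmul ℂ, smul_smul]
    nth_rewrite 2 [← one_smul ℂ (Asm d l j)]
    congr 1
    push_cast
    field_simp
  · intro k
    rw [← Finset.smul_sum, sum_Asm]
    simp only [Bsm]
    match_scalars <;> push_cast <;> ring

lemma JM_marg_right {g : ℝ} (h0 : 0 ≤ g) (h1 : g ≤ 1) : JM d 0 g := by
  have hd : ((d:ℝ)) ≠ 0 := Nat.cast_ne_zero.mpr (NeZero.ne d)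
  refine ⟨fun j k => (((1/d : ℝ)):ℂ) • Bsm d g k, ?_, ?_, ?_⟩
  · intro j k
    exact psd_smul _ (one_div_nonneg.mpr (Nat.cast_nonneg d)) (psd_Bsm d h0 h1 k)
  · intro j
    rw [← Finset.smul_sum, sum_Bsm]
    simp only [Asm]
    match_scalars <;> push_cast <;> ring
  · intro k
    have hdc : ((d:ℂ)) ≠ 0 := Nat.cast_ne_zero.mpr (NeZero.ne d)
    rw [Finset.sum_const, Finset.card_univ, ZMod.card, ← Nat.cast_smul_eq_nsmul ℂ, smul_smul]
    nth_rewrite 2 [← one_smul ℂ (Bsm d g k)]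
    congr 1
    push_cast
    field_simp

end Aux

theorem joint_measurability_monotone (d : ℕ) (hd : 2 ≤ d) [NeZero d]
    (l g : ℝ) (hl : 0 < l) (hl1 : l ≤ 1) (hg : 0 < g) (hg1 : g ≤ 1) :
    JM d l g ↔
      ∀ l' g' : ℝ, 0 ≤ l' → l' ≤ l → 0 ≤ g' → g' ≤ g → JM d l' g' := by
  constructor
  · intro h l' g' hl'0 hl'l hg'0 hg'g
    -- first bring g down to g'
    have hs0 : 0 ≤ g'/g := div_nonneg hg'0 hg.le
    have hs1 : g'/g ≤ 1 := (div_le_one hg).mpr hg'g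
    have step1 : JM d l g' := by
      have := JM_convex d hs0 hs1 h (JM_marg_left d hl.le hl1)
      have e1 : g'/g*g + (1-g'/g)*0 = g' := by field_simp; ring
      have e2 : g'/g*l + (1-g'/g)*l = l := by ring
      rwa [e1, e2] at this
    have hg'1 : g' ≤ 1 := le_trans hg'g hg1
    have ht0 : 0 ≤ l'/l := div_nonneg hl'0 hl.le
    have ht1 : l'/l ≤ 1 := (div_le_one hl).mpr hl'l
    have := JM_convex d ht0 ht1 step1 (JM_marg_right d hg'0 hg'1)
    have e1 : l'/l*l + (1-l'/l)*0 = l' := by field_simp; ring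
    have e2 : l'/l*g' + (1-l'/l)*g' = g' := by ring
    rwa [e1, e2] at this
  · intro h
    exact h l g hl.le le_rfl hg.le le_rfl
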